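/- arXiv:1710.04656 — 4 statements merged into one kernel-verified Lean document; each statement's English description precedes it below -/
import Mathlib

section
/- Let g be a finite simple undirected graph on N with all degrees positive, and let q ∈ (0,1) be such that q cannot be written as a fraction with denominator equal to the degree d_i of any node i (e.g., q irrational). Then S ⊆ N is a convention for q if and only if N \ S is a convention for 1 − q. -/
open Finset

/-- `S` is a convention for threshold `q`. -/
def Convention {V : Type*} [Fintype V] [DecidableEq V] (G : SimpleGraph V)
    [DecidableRel G.Adj] (q : ℝ) (S : Finset V) : Prop :=
  (∀ i ∈ S, q * (G.degree i : ℝ) ≤ ((G.neighborFinset i ∩ S).card : ℝ)) ∧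
  (∀ i ∉ S, ((G.neighborFinset i ∩ S).card : ℝ) < q * (G.degree i : ℝ))

theorem convention_compl_iff
    {V : Type*} [Fintype V] [DecidableEq V] (G : SimpleGraph V) [DecidableRel G.Adj]
    (hdeg : ∀ i : V, 1 ≤ G.degree i) (q : ℝ) (hq : q ∈ Set.Ioo (0 : ℝ) 1)
    (hirr : ∀ i : V, ∀ m : ℕ, q ≠ (m : ℝ) / (G.degree i : ℝ))
    (S : Finset V) :
    Convention G q S ↔ Convention G (1 - q) Sᶜ := by
  have hd : ∀ i : V, (0 : ℝ) < (G.degree i : ℝ) := by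
    intro i; exact_mod_cast Nat.lt_of_lt_of_le Nat.zero_lt_one (hdeg i)
  have hne : ∀ i : V, ∀ m : ℕ, q * (G.degree i : ℝ) ≠ (m : ℝ) := by
    intro i m h
    exact hirr i m ((eq_div_iff (hd i).ne').mpr h)
  have hcard : ∀ i : V, ((G.neighborFinset i ∩ Sᶜ).card : ℝ)
      = (G.degree i : ℝ) - ((G.neighborFinset i ∩ S).card : ℝ) := by
    intro i
    have h1 : G.neighborFinset i ∩ Sᶜ = G.neighborFinset i \ S := by
      ext x; simp
    have h2 : (G.neighborFinset i ∩ S).card + (G.neighborFinset i \ S).card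
        = (G.neighborFinset i).card := Finset.card_inter_add_card_sdiff _ _
    rw [h1]
    have : (G.neighborFinset i).card = G.degree i := G.card_neighborFinset_eq_degree i
    rw [this] at h2
    have := congrArg (fun n : ℕ => (n : ℝ)) h2
    push_cast at this
    linarith
  constructor
  · rintro ⟨h1, h2⟩
    constructor
    · intro i hi
      rw [Finset.mem_compl] at hi
      have := h2 i hi
      rw [hcard i]
      nlinarith [hd i]
    · intro i hi
      rw [Finset.mem_compl, not_not] at hi
      have hle := h1 i hi
      have hlt : q * (G.degree i : ℝ) < ((G.neighborFinset i ∩ S).card : ℝ) :=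
        lt_of_le_of_ne hle (hne i _)
      rw [hcard i]
      nlinarith [hd i]
  · rintro ⟨h1, h2⟩
    constructor
    · intro i hi
      have hi' : i ∉ Sᶜ := by simp [hi]
      have := h2 i hi'
      rw [hcard i] at this
      nlinarith [hd i]
    · intro i hi
      have hi' : i ∈ Sᶜ := Finset.mem_compl.mpr hi
      have hle := h1 i hi'
      rw [hcard i] at hle
      have hle' : ((G.neighborFinset i ∩ S).card : ℝ) ≤ q * (G.degree i : ℝ) := by
        nlinarith [hd i]
      exact lt_of_le_of_ne hle' fun h => hne i _ h.symm
end

section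
/- Let Q ⊆ [0,1] be nonempty. If S is a robust convention relative to Q (a convention for all q ∈ Q), then S is a convention for every q in the half-open interval (inf(Q), sup(Q)]. -/
open Finset

theorem robust_convention_on_interval
    {V : Type*} [Fintype V] [DecidableEq V] (G : SimpleGraph V) [DecidableRel G.Adj]
    (hdeg : ∀ i : V, 1 ≤ G.degree i)
    (Q : Set ℝ) (hQsub : Q ⊆ Set.Icc (0 : ℝ) 1) (hQne : Q.Nonempty)
    (hlt : sInf Q < sSup Q) (S : Finset V)
    (hrobust : ∀ q ∈ Q, Convention G q S) :
    ∀ q ∈ Set.Ioc (sInf Q) (sSup Q), Convention G q S := by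
  intro q hq
  obtain ⟨hq1, hq2⟩ := hq
  constructor
  · intro i hi
    have hd : (0 : ℝ) < G.degree i := by
      have := hdeg i; exact_mod_cast Nat.lt_of_lt_of_le Nat.zero_lt_one this
    have hub : sSup Q ≤ ((G.neighborFinset i ∩ S).card : ℝ) / G.degree i := by
      apply csSup_le hQne
      intro q' hq'
      rw [le_div_iff₀ hd]
      exact (hrobust q' hq').1 i hi
    rw [← le_div_iff₀ hd]
    exact le_trans hq2 hub
  · intro i hi
    have hd : (0 : ℝ) < G.degree i := by
      have := hdeg i; exact_mod_cast Nat.lt_of_lt_of_le Nat.zero_lt_one this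
    have hlb : ((G.neighborFinset i ∩ S).card : ℝ) / G.degree i ≤ sInf Q := by
      apply le_csInf hQne
      intro q' hq'
      rw [div_le_iff₀ hd]
      exact le_of_lt ((hrobust q' hq').2 i hi)
    rw [← div_lt_iff₀ hd]
    exact lt_of_le_of_lt hlb hq1
end

section
/- For absolute threshold t = 1, the atoms of the behavioral community structure C(1,g) are exactly the connected components of g: S is a convention for t = 1 if and only if S is a union of connected components of g. -/
open Finset

/-- `S` is a convention for the absolute threshold `t` (a natural number). -/
def ConventionAbs {V : Type*} [Fintype V] [DecidableEq V] (G : SimpleGraph V)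
    [DecidableRel G.Adj] (t : ℕ) (S : Finset V) : Prop :=
  (∀ i ∈ S, t ≤ (G.neighborFinset i ∩ S).card) ∧
  (∀ i ∉ S, (G.neighborFinset i ∩ S).card < t)

/-- `C(t,g)`: the σ-algebra generated by all conventions for absolute threshold `t`. -/
def CommStructureAbs {V : Type*} [Fintype V] [DecidableEq V] (G : SimpleGraph V)
    [DecidableRel G.Adj] (t : ℕ) : MeasurableSpace V :=
  MeasurableSpace.generateFrom {A : Set V | ∃ S : Finset V, ConventionAbs G t S ∧ A = ↑S}

/-- `A` is an atom (minimal nonempty element) of `C(t,g)`. -/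
def IsAtomOfAbs {V : Type*} [Fintype V] [DecidableEq V] (G : SimpleGraph V)
    [DecidableRel G.Adj] (t : ℕ) (A : Set V) : Prop :=
  @MeasurableSet V (CommStructureAbs G t) A ∧ A.Nonempty ∧
    ∀ B : Set V, @MeasurableSet V (CommStructureAbs G t) B → B ⊆ A → B.Nonempty → B = A

theorem abs_threshold_one_atoms_are_components
    {V : Type*} [Fintype V] [DecidableEq V] (G : SimpleGraph V) [DecidableRel G.Adj]
    (hdeg : ∀ i : V, 1 ≤ G.degree i) :
    (∀ S : Finset V, ConventionAbs G 1 S ↔ ∀ v ∈ S, ∀ w : V, G.Reachable v w → w ∈ S) ∧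
      (∀ A : Set V, IsAtomOfAbs G 1 A ↔ ∃ v : V, A = {w | G.Reachable v w}) := by
  classical
  have key : ∀ S : Finset V, ConventionAbs G 1 S ↔
      ∀ v ∈ S, ∀ w : V, G.Reachable v w → w ∈ S := by
    intro S
    constructor
    · rintro ⟨h1, h2⟩ v hv w hw
      obtain ⟨p⟩ := hw
      suffices H : ∀ {a b : V}, G.Walk a b → a ∈ S → b ∈ S from H p hv
      intro a b p
      induction p with
      | nil => exact id
      | @cons a c b hadj p ih =>
          intro ha
          apply ih
          by_contra hc
          have hlt := h2 c hc
          have hmem : a ∈ G.neighborFinset c ∩ S := by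
            simp [SimpleGraph.mem_neighborFinset, hadj.symm, ha]
          have hpos : 0 < (G.neighborFinset c ∩ S).card := card_pos.mpr ⟨a, hmem⟩
          omega
    · intro h
      constructor
      · intro i hi
        obtain ⟨j, hj⟩ := card_pos.mp (hdeg i)
        have hadj : G.Adj i j := (SimpleGraph.mem_neighborFinset G i j).mp hj
        have hjS : j ∈ S := h i hi j hadj.reachable
        exact card_pos.mpr ⟨j, mem_inter.mpr ⟨hj, hjS⟩⟩
      · intro i hi
        by_contra hc
        push_neg at hc
        obtain ⟨j, hj⟩ := card_pos.mp hc
        obtain ⟨hjn, hjS⟩ := mem_inter.mp hj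
        have hadj : G.Adj i j := (SimpleGraph.mem_neighborFinset G i j).mp hjn
        exact hi (h j hjS i hadj.symm.reachable)
  have hclosed : ∀ A : Set V, @MeasurableSet V (CommStructureAbs G 1) A →
      ∀ v ∈ A, ∀ w, G.Reachable v w → w ∈ A := by
    intro A hA
    let m : MeasurableSpace V :=
      { MeasurableSet' := fun A => ∀ v ∈ A, ∀ w, G.Reachable v w → w ∈ A
        measurableSet_empty := by simp
        measurableSet_compl := by
          intro A hA v hv w hw hwA
          exact hv (hA w hwA v hw.symm)
        measurableSet_iUnion := by
          intro f hf v hv w hw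
          obtain ⟨i, hi⟩ := Set.mem_iUnion.mp hv
          exact Set.mem_iUnion.mpr ⟨i, hf i v hi w hw⟩ }
    have hle : CommStructureAbs G 1 ≤ m := by
      apply MeasurableSpace.generateFrom_le
      rintro A ⟨S, hS, rfl⟩
      intro v hv w hw
      exact (key S).mp hS v hv w hw
    exact hle A hA
  have comp_meas : ∀ v : V, @MeasurableSet V (CommStructureAbs G 1) {w | G.Reachable v w} := by
    intro v
    have hco : ({w | G.Reachable v w} : Set V) = ↑({w | G.Reachable v w}.toFinset) := by
      simp
    rw [hco]
    apply MeasurableSpace.measurableSet_generateFrom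
    refine ⟨_, (key _).mpr ?_, rfl⟩
    intro a ha w hw
    simp only [Set.mem_toFinset, Set.mem_setOf_eq] at *
    exact ha.trans hw
  refine ⟨key, fun A => ⟨?_, ?_⟩⟩
  · rintro ⟨hA, ⟨v, hv⟩, hmin⟩
    refine ⟨v, ?_⟩
    have hsub : {w | G.Reachable v w} ⊆ A := fun w hw => hclosed A hA v hv w hw
    exact (hmin _ (comp_meas v) hsub ⟨v, SimpleGraph.Reachable.refl v⟩).symm
  · rintro ⟨v, rfl⟩
    refine ⟨comp_meas v, ⟨v, SimpleGraph.Reachable.refl v⟩, ?_⟩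
    intro B hB hBsub hBne
    obtain ⟨w, hw⟩ := hBne
    have hvw : G.Reachable v w := hBsub hw
    ext u
    constructor
    · exact fun hu => hBsub hu
    · intro hu
      exact hclosed B hB w hw u (hvw.symm.trans hu)
end

section
/- In the Erdős–Rényi random graph G(n,p) with p = p(n) < (1−ε)(k log n / n)^{1/k} for some fixed integer k ≥ 1 and ε ∈ (0,1), the expected number of k-closed sets of exactly k nodes, which equals C(n,k)·(1−p^k)^{n−k}, tends to infinity as n → ∞. -/
open Filter Real

/-- Below the sharp threshold `(k log n / n)^{1/k}`, the expected number of
`k`-closed sets of exactly `k` nodes in `G(n,p)`, namely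
`C(n,k)·(1−p^k)^{n−k}`, tends to infinity. -/
theorem expected_kClosed_tendsto_atTop
    (k : ℕ) (hk : 1 ≤ k) (ε : ℝ) (hε : ε ∈ Set.Ioo (0 : ℝ) 1)
    (p : ℕ → ℝ) (hp0 : ∀ n, 0 ≤ p n)
    (hplt : ∀ᶠ n : ℕ in atTop,
      p n < (1 - ε) * ((k * Real.log n / n) ^ ((1 : ℝ) / k))) :
    Tendsto (fun n : ℕ => (n.choose k : ℝ) * (1 - p n ^ k) ^ (n - k))
      atTop atTop := by
  obtain ⟨hε0, hε1⟩ := hε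
  have hden : (0:ℝ) < 1 - ε/2 := by linarith
  set c : ℝ := (1 - ε) / (1 - ε/2) with hc
  have hc1 : c < 1 := by rw [hc, div_lt_one hden]; linarith
  have hc0 : 0 ≤ c := div_nonneg (by linarith) hden.le
  have hkR : (0:ℝ) < k := by exact_mod_cast hk
  set A : ℕ → ℝ := fun n =>
    (1 - c) * (k * Real.log n) - (k * Real.log 2 + Real.log (k.factorial : ℝ)) with hA
  -- A tends to infinity
  have hlog : Tendsto (fun n : ℕ => Real.log n) atTop atTop :=
    Real.tendsto_log_atTop.comp tendsto_natCast_atTop_atTop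
  have hAtop : Tendsto A atTop atTop := by
    apply tendsto_atTop_add_const_right
    have h1 : Tendsto (fun n : ℕ => ((1 - c) * k) * Real.log n) atTop atTop :=
      hlog.const_mul_atTop (by nlinarith)
    refine h1.congr fun n => by ring
  -- the quantity `(1-ε)^k * (k log n / n)` tends to 0
  have hzero : Tendsto (fun n : ℕ => (1-ε)^k * (k * Real.log n / n)) atTop (nhds 0) := by
    have h0 : Tendsto (fun x : ℝ => Real.log x / x) atTop (nhds 0) :=
      Real.isLittleO_log_id_atTop.tendsto_div_nhds_zero
    have h1 : Tendsto (fun n : ℕ => Real.log n / n) atTop (nhds 0) :=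
      h0.comp tendsto_natCast_atTop_atTop
    have h2 := h1.const_mul ((1-ε)^k * k)
    rw [mul_zero] at h2
    refine h2.congr fun n => by ring
  have hsmall : ∀ᶠ n : ℕ in atTop, (1-ε)^k * (k * Real.log n / n) ≤ ε/2 :=
    hzero.eventually (eventually_le_nhds (by linarith))
  -- main eventual lower bound
  have hev : ∀ᶠ n : ℕ in atTop,
      Real.exp (A n) ≤ (n.choose k : ℝ) * (1 - p n ^ k) ^ (n - k) := by
    filter_upwards [hplt, hsmall, eventually_ge_atTop (2*k),
      eventually_ge_atTop 1] with n hlt hsm hn2k hn1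
    have hn0 : (0:ℝ) < n := by exact_mod_cast (by omega : 0 < n)
    have hlogn0 : 0 ≤ Real.log n := Real.log_nonneg (by exact_mod_cast hn1)
    have hbase0 : 0 ≤ (k:ℝ) * Real.log n / n := by positivity
    set x : ℝ := p n ^ k with hxdef
    have hx0 : 0 ≤ x := pow_nonneg (hp0 n) k
    -- x ≤ (1-ε)^k * (k log n / n)
    have hxle : x ≤ (1-ε)^k * ((k:ℝ) * Real.log n / n) := by
      have hpow : (( (k:ℝ) * Real.log n / n) ^ ((1:ℝ)/k)) ^ k
          = (k:ℝ) * Real.log n / n := by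
        rw [← Real.rpow_natCast (((k:ℝ) * Real.log n / n) ^ ((1:ℝ)/k)) k,
          ← Real.rpow_mul hbase0, one_div, inv_mul_cancel₀
            (by exact_mod_cast (by omega : k ≠ 0) : ((k:ℕ):ℝ) ≠ 0), Real.rpow_one]
      calc x ≤ ((1-ε) * (((k:ℝ) * Real.log n / n) ^ ((1:ℝ)/k))) ^ k :=
              pow_le_pow_left₀ (hp0 n) hlt.le k
        _ = (1-ε)^k * ((((k:ℝ) * Real.log n / n) ^ ((1:ℝ)/k)) ^ k) := mul_pow _ _ _
        _ = (1-ε)^k * ((k:ℝ) * Real.log n / n) := by rw [hpow]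
    have hxhalf : x ≤ ε/2 := hxle.trans hsm
    have h1x : (0:ℝ) < 1 - x := by linarith
    -- step 1 : exp lower bound on (1-x)^(n-k)
    have hexp_le : Real.exp (-(x/(1-x))) ≤ 1 - x := by
      have h := Real.add_one_le_exp (x/(1-x))
      have heq : x/(1-x) + 1 = (1-x)⁻¹ := by field_simp; ring
      rw [heq] at h
      rw [Real.exp_neg]
      calc (Real.exp (x/(1-x)))⁻¹ ≤ ((1-x)⁻¹)⁻¹ := by
            exact inv_anti₀ (inv_pos.mpr h1x) h
        _ = 1 - x := inv_inv _
    have hpow1 : Real.exp (-(((n-k:ℕ):ℝ) * (x/(1-x)))) ≤ (1 - x) ^ (n - k) := by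
      calc Real.exp (-(((n-k:ℕ):ℝ) * (x/(1-x))))
          = Real.exp (-(x/(1-x))) ^ (n-k) := by
            rw [← Real.exp_nat_mul]; ring_nf
        _ ≤ (1 - x) ^ (n-k) := pow_le_pow_left₀ (Real.exp_pos _).le hexp_le _
    -- bound the exponent
    have hfrac : x/(1-x) ≤ x/(1-ε/2) :=
      div_le_div_of_nonneg_left hx0 hden (by linarith)
    have hkey : ((n-k:ℕ):ℝ) * (x/(1-x)) ≤ c * ((k:ℝ) * Real.log n) := by
      have hnk : ((n-k:ℕ):ℝ) ≤ (n:ℝ) := by exact_mod_cast Nat.sub_le n k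
      calc ((n-k:ℕ):ℝ) * (x/(1-x)) ≤ (n:ℝ) * (x/(1-ε/2)) :=
            mul_le_mul hnk hfrac (by positivity) hn0.le
        _ = ((n:ℝ) * x)/(1-ε/2) := by ring
        _ ≤ ((n:ℝ) * ((1-ε)^k * ((k:ℝ) * Real.log n / n)))/(1-ε/2) := by
            gcongr
        _ = ((1-ε)^k * ((k:ℝ) * Real.log n))/(1-ε/2) := by
            field_simp
        _ ≤ ((1-ε) * ((k:ℝ) * Real.log n))/(1-ε/2) := by
            have hp1 : (1-ε)^k ≤ 1-ε := pow_le_of_le_one (by linarith) (by linarith) (by omega)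
            have : (0:ℝ) ≤ (k:ℝ) * Real.log n := by positivity
            exact div_le_div_of_nonneg_right (mul_le_mul_of_nonneg_right hp1 this) hden.le
        _ = c * ((k:ℝ) * Real.log n) := by rw [hc]; ring
    have hpow2 : Real.exp (-(c * ((k:ℝ) * Real.log n))) ≤ (1 - x) ^ (n - k) :=
      le_trans (by apply Real.exp_le_exp.mpr; linarith) hpow1
    -- step 2 : choose lower bound
    have hch : ((n+1-k:ℕ):ℝ) ^ k / (k.factorial : ℝ) ≤ (n.choose k : ℝ) :=
      Nat.pow_le_choose k n
    have hnat : n ≤ 2*(n+1-k) := by omega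
    have hn2 : (n:ℝ)/2 ≤ ((n+1-k:ℕ):ℝ) := by
      have : (n:ℝ) ≤ 2 * ((n+1-k:ℕ):ℝ) := by exact_mod_cast hnat
      linarith
    have hch2 : Real.exp ((k:ℝ) * Real.log ((n:ℝ)/2) - Real.log (k.factorial : ℝ))
        ≤ (n.choose k : ℝ) := by
      have hhalf : (0:ℝ) < (n:ℝ)/2 := by positivity
      have hfk : (0:ℝ) < (k.factorial : ℝ) := by exact_mod_cast k.factorial_pos
      have he : Real.exp ((k:ℝ) * Real.log ((n:ℝ)/2)) = ((n:ℝ)/2) ^ k := by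
        rw [← Real.log_pow, Real.exp_log (by positivity)]
      have hle : ((n:ℝ)/2) ^ k ≤ ((n+1-k:ℕ):ℝ) ^ k :=
        pow_le_pow_left₀ (by positivity) hn2 k
      calc Real.exp ((k:ℝ) * Real.log ((n:ℝ)/2) - Real.log (k.factorial : ℝ))
          = Real.exp ((k:ℝ) * Real.log ((n:ℝ)/2)) / (k.factorial : ℝ) := by
            rw [Real.exp_sub, Real.exp_log hfk]
        _ = ((n:ℝ)/2) ^ k / (k.factorial : ℝ) := by rw [he]
        _ ≤ ((n+1-k:ℕ):ℝ) ^ k / (k.factorial : ℝ) := by gcongr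
        _ ≤ (n.choose k : ℝ) := hch
    -- combine
    have hcomb : Real.exp ((k:ℝ) * Real.log ((n:ℝ)/2) - Real.log (k.factorial : ℝ))
        * Real.exp (-(c * ((k:ℝ) * Real.log n)))
        ≤ (n.choose k : ℝ) * (1 - x) ^ (n - k) :=
      mul_le_mul hch2 hpow2 (Real.exp_pos _).le (Nat.cast_nonneg _)
    have hAeq : Real.exp (A n) =
        Real.exp ((k:ℝ) * Real.log ((n:ℝ)/2) - Real.log (k.factorial : ℝ))
        * Real.exp (-(c * ((k:ℝ) * Real.log n))) := by
      rw [← Real.exp_add, hA]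
      congr 1
      rw [Real.log_div (ne_of_gt hn0) two_ne_zero]
      ring
    rw [hAeq]
    exact hcomb
  exact tendsto_atTop_mono' atTop hev (Real.tendsto_exp_atTop.comp hAtop)
end
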